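/- If the empty cube is derivable from a closed PCNF ψ by cube resolution, existential reduction, and the model generation rule, then ψ is satisfiable. -/

import Mathlib

/-- Variables are natural numbers. -/
abbrev Var := Nat

/-- A literal: a variable with a polarity (`pos = true` means positive). -/
structure Lit where
  var : Var
  pos : Bool
deriving DecidableEq, Repr

abbrev Clause := List Lit
abbrev Cube := List Lit
abbrev CNF := List Clause

abbrev Assignment := Var → Bool

def Lit.eval (α : Assignment) (l : Lit) : Bool :=
  if l.pos then α l.var else !(α l.var)

def Clause.eval (α : Assignment) (C : Clause) : Bool := C.any (Lit.eval α)

def Cube.evalCube (α : Assignment) (C : Cube) : Bool := C.all (Lit.eval α)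

def CNF.eval (α : Assignment) (φ : CNF) : Bool := φ.all (Clause.eval α)

/-- A flat quantifier prefix: list of (quantifier, variable); `true` = ∃, `false` = ∀. -/
abbrev QPrefix := List (Bool × Var)

/-- Recursive semantics of closed prenex QBFs, relative to an ambient assignment `α`. -/
def QSat (α : Assignment) : QPrefix → (Assignment → Bool) → Prop
  | [], m => m α = true
  | (true, x) :: p, m => ∃ b, QSat (Function.update α x b) p m
  | (false, x) :: p, m => ∀ b, QSat (Function.update α x b) p m

/-- Satisfiability of a closed prenex formula. -/
def Sat (L : QPrefix) (m : Assignment → Bool) : Prop :=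
  QSat (fun _ => false) L m

def pvars (L : QPrefix) : List Var := L.map Prod.snd

/-- The quantifier of a variable in the prefix (`true` = ∃). -/
def quantOf (L : QPrefix) (x : Var) : Bool :=
  ((L.find? (fun p => p.2 == x)).map Prod.fst).getD true

/-- Position of a variable in the linear prefix ordering. -/
def varIdx (L : QPrefix) (x : Var) : Nat := (pvars L).idxOf x

def Clause.vars (C : Clause) : List Var := C.map Lit.var
def CNF.vars (φ : CNF) : List Var := φ.flatMap Clause.vars

/-- A closed PCNF: all matrix variables are quantified, and no variable twice. -/
def Closed (L : QPrefix) (φ : CNF) : Prop :=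
  (∀ v ∈ CNF.vars φ, v ∈ pvars L) ∧ (pvars L).Nodup

def existLits (L : QPrefix) (C : List Lit) : List Lit :=
  C.filter (fun l => quantOf L l.var)

def univLits (L : QPrefix) (C : List Lit) : List Lit :=
  C.filter (fun l => !(quantOf L l.var))

/-- Universal reduction of a clause: remove universal literals larger than all
existential literals of the clause. -/
def univRed (L : QPrefix) (C : Clause) : Clause :=
  C.filter (fun l =>
    !((!(quantOf L l.var)) &&
      (existLits L C).all (fun l' => decide (varIdx L l'.var < varIdx L l.var))))

/-- Existential reduction of a cube: remove existential literals larger than all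
universal literals of the cube. -/
def exRed (L : QPrefix) (C : Cube) : Cube :=
  C.filter (fun l =>
    !((quantOf L l.var) &&
      (univLits L C).all (fun l' => decide (varIdx L l'.var < varIdx L l.var))))

def Lit.neg (l : Lit) : Lit := ⟨l.var, !l.pos⟩

/-- Tautological clause / contradictory cube: contains complementary literals. -/
def Tauto (C : List Lit) : Prop := ∃ l ∈ C, Lit.neg l ∈ C

/-- Tentative Q-qResolvent of two clauses on existential pivot `p`. -/
def qResolvent (L : QPrefix) (C₁ C₂ : Clause) (p : Var) : Clause :=
  (univRed L C₁).filter (fun l => l ≠ ⟨p, true⟩) ++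
  (univRed L C₂).filter (fun l => l ≠ ⟨p, false⟩)

/-- Q-resolution derivations from the clauses of `φ`. -/
inductive QDer (L : QPrefix) (φ : CNF) : Clause → Prop
  | ax {C} : C ∈ φ → QDer L φ C
  | ur {C} : QDer L φ C → QDer L φ (univRed L C)
  | res {C₁ C₂} {p : Var} :
      QDer L φ C₁ → QDer L φ C₂ →
      ¬ Tauto C₁ → ¬ Tauto C₂ →
      quantOf L p = true → (⟨p, true⟩ : Lit) ∈ C₁ → (⟨p, false⟩ : Lit) ∈ C₂ →
      ¬ Tauto (qResolvent L C₁ C₂ p) →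
      QDer L φ (qResolvent L C₁ C₂ p)

/-- The initial cube of a (total) model `α`: conjunction of the literals set by `α`,
in prefix order. -/
def initCube (L : QPrefix) (α : Assignment) : Cube :=
  L.map (fun p => ⟨p.2, α p.2⟩)

/-- Tentative cube qResolvent of two cubes on universal pivot `x`. -/
def cubeResolvent (L : QPrefix) (C₁ C₂ : Cube) (x : Var) : Cube :=
  (exRed L C₁).filter (fun l => l ≠ ⟨x, true⟩) ++
  (exRed L C₂).filter (fun l => l ≠ ⟨x, false⟩)

/-- Cube derivations: model generation rule, existential reduction, cube resolution. -/
inductive CubeDer (L : QPrefix) (φ : CNF) : Cube → Prop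
  | init (α : Assignment) : CNF.eval α φ = true → CubeDer L φ (initCube L α)
  | er {C} : CubeDer L φ C → CubeDer L φ (exRed L C)
  | res {C₁ C₂} {x : Var} :
      CubeDer L φ C₁ → CubeDer L φ C₂ →
      ¬ Tauto C₁ → ¬ Tauto C₂ →
      quantOf L x = false → (⟨x, true⟩ : Lit) ∈ C₁ → (⟨x, false⟩ : Lit) ∈ C₂ →
      ¬ Tauto (cubeResolvent L C₁ C₂ x) →
      CubeDer L φ (cubeResolvent L C₁ C₂ x)

/-- Block-structured prefix: list of (quantifier, block of variables). -/
abbrev BPrefix := List (Bool × List Var)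

def flatP (P : BPrefix) : QPrefix := P.flatMap (fun b => b.2.map (fun x => (b.1, x)))

def SatB (P : BPrefix) (m : Assignment → Bool) : Prop := Sat (flatP P) m

/-- Closed PCNF with block prefix. -/
def ClosedB (P : BPrefix) (φ : CNF) : Prop :=
  (∀ v ∈ CNF.vars φ, v ∈ pvars (flatP P)) ∧
  (∀ v ∈ pvars (flatP P), v ∈ CNF.vars φ) ∧
  (pvars (flatP P)).Nodup



-- basic lemmas
lemma pvars_append (A B : QPrefix) : pvars (A ++ B) = pvars A ++ pvars B := by
  simp [pvars]

lemma pvars_cons (p : Bool × Var) (B : QPrefix) : pvars (p :: B) = p.2 :: pvars B := rfl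

lemma lit_eval_congr {β β' : Assignment} (l : Lit) (h : β l.var = β' l.var) :
    Lit.eval β l = Lit.eval β' l := by
  simp [Lit.eval, h]

lemma qsat_mono {L₂ : QPrefix} :
    ∀ {α : Assignment} {m₁ m₂ : Assignment → Bool},
    (∀ β, (∀ v, v ∉ pvars L₂ → β v = α v) → m₁ β = true → m₂ β = true) →
    QSat α L₂ m₁ → QSat α L₂ m₂ := by
  induction L₂ with
  | nil => intro α m₁ m₂ h h1; exact h α (fun v _ => rfl) h1
  | cons p rest ih =>
    intro α m₁ m₂ h h1
    obtain ⟨q, y⟩ := p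
    cases q with
    | true =>
      obtain ⟨b, hb⟩ := h1
      refine ⟨b, ih ?_ hb⟩
      intro β hβ hm
      refine h β ?_ hm
      intro v hv
      rw [pvars_cons, List.mem_cons] at hv
      push_neg at hv
      rw [hβ v hv.2, Function.update_of_ne hv.1]
    | false =>
      intro b
      refine ih ?_ (h1 b)
      intro β hβ hm
      refine h β ?_ hm
      intro v hv
      rw [pvars_cons, List.mem_cons] at hv
      push_neg at hv
      rw [hβ v hv.2, Function.update_of_ne hv.1]

lemma qsat_true {m : Assignment → Bool} (h : ∀ β, m β = true) :
    ∀ (L : QPrefix) (α : Assignment), QSat α L m := by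
  intro L
  induction L with
  | nil => intro α; exact h α
  | cons p rest ih =>
    intro α
    obtain ⟨q, y⟩ := p
    cases q with
    | true => exact ⟨true, ih _⟩
    | false => intro b; exact ih _

lemma quantOf_eq {L₁ L₂ : QPrefix} {q : Bool} {y : Var}
    (h : (pvars (L₁ ++ (q, y) :: L₂)).Nodup) :
    quantOf (L₁ ++ (q, y) :: L₂) y = q := by
  have hy : y ∉ pvars L₁ := by
    rw [pvars_append] at h
    intro hmem
    exact (List.disjoint_of_nodup_append h) hmem (by simp [pvars_cons])
  unfold quantOf
  rw [List.find?_append]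
  have h1 : List.find? (fun p => p.2 == y) L₁ = none := by
    rw [List.find?_eq_none]
    intro p hp hbeq
    have : p.2 ∈ pvars L₁ := List.mem_map_of_mem (f := Prod.snd) hp
    rw [show p.2 = y from by simpa using hbeq] at this
    exact hy this
  rw [h1]
  simp
lemma varIdx_lt {L₁ L₂ : QPrefix} {q : Bool} {y z : Var}
    (h : (pvars (L₁ ++ (q, y) :: L₂)).Nodup) (hz : z ∈ pvars L₂) :
    varIdx (L₁ ++ (q, y) :: L₂) y < varIdx (L₁ ++ (q, y) :: L₂) z := by
  rw [pvars_append, pvars_cons] at h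
  have hd := List.disjoint_of_nodup_append h
  have hy1 : y ∉ pvars L₁ := fun hm => hd hm (by simp)
  have hz1 : z ∉ pvars L₁ := fun hm => hd hm (by simp [hz])
  have hzy : z ≠ y := by
    have := (List.nodup_append.mp h).2.1
    intro he; rw [he] at hz
    exact (List.nodup_cons.mp this).1 hz
  unfold varIdx
  rw [pvars_append, pvars_cons, List.idxOf_append_of_notMem hy1,
      List.idxOf_append_of_notMem hz1, List.idxOf_cons_self,
      List.idxOf_cons_ne _ (fun hh => hzy hh.symm)]
  omega

/-- truth of all literals of a non-tautological cube on a variable is determined by one -/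
lemma same_sign {C : Cube} (hnt : ¬ Tauto C) {l₁ l₂ : Lit}
    (h1 : l₁ ∈ C) (h2 : l₂ ∈ C) (hv : l₁.var = l₂.var) : l₁ = l₂ := by
  by_contra hne
  apply hnt
  refine ⟨l₁, h1, ?_⟩
  have : l₂ = Lit.neg l₁ := by
    obtain ⟨v1, p1⟩ := l₁; obtain ⟨v2, p2⟩ := l₂
    simp only [Lit.neg]
    simp at hv
    cases p1 <;> cases p2 <;> simp_all
  rwa [← this]

/-- the pure cube lemma: the existential player can make a cube true on its own,
provided all remaining cube variables in the suffix are existential. -/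
lemma qsat_cube {LL : QPrefix} (C : Cube) (hnt : ¬ Tauto C) :
    ∀ (L₂ L₁ : QPrefix), LL = L₁ ++ L₂ → (pvars LL).Nodup →
    ∀ (α : Assignment),
    (∀ l ∈ C, l.var ∉ pvars L₂ → Lit.eval α l = true) →
    (∀ l ∈ C, l.var ∈ pvars L₂ → quantOf LL l.var = true) →
    QSat α L₂ (fun β => Cube.evalCube β C) := by
  intro L₂
  induction L₂ with
  | nil =>
    intro L₁ hsplit hnd α hout _
    simp only [QSat, Cube.evalCube, List.all_eq_true]
    intro l hl
    exact hout l hl (by simp [pvars])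
  | cons p rest ih =>
    intro L₁ hsplit hnd α hout hq
    obtain ⟨q, y⟩ := p
    have hynr : y ∉ pvars rest := by
      rw [hsplit, pvars_append, pvars_cons] at hnd
      exact (List.nodup_cons.mp (List.nodup_append.mp hnd).2.1).1
    cases q with
    | false =>
      -- no cube literal on y
      have hyC : ∀ l ∈ C, l.var ≠ y := by
        intro l hl he
        have := hq l hl (by simp [pvars_cons, he])
        rw [he] at this
        rw [hsplit] at this
        rw [quantOf_eq (hsplit ▸ hnd)] at this
        exact Bool.false_ne_true this
      intro b
      refine ih (L₁ ++ [(false, y)]) (by simp [hsplit]) hnd _ ?_ ?_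
      · intro l hl hlr
        rw [show Lit.eval (Function.update α y b) l = Lit.eval α l from
          lit_eval_congr l (Function.update_of_ne (hyC l hl) _ _)]
        refine hout l hl ?_
        simp only [pvars_cons, List.mem_cons, not_or]
        exact ⟨fun h => (hyC l hl) h, hlr⟩
      · intro l hl hlr
        exact hq l hl (by simp [pvars_cons, hlr])
    | true =>
      refine ⟨decide ((⟨y, true⟩ : Lit) ∈ C), ?_⟩
      refine ih (L₁ ++ [(true, y)]) (by simp [hsplit]) hnd _ ?_ ?_
      · intro l hl hlr
        by_cases hvy : l.var = y
        · -- literal on y is satisfied by our choice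
          have : Lit.eval (Function.update α y (decide ((⟨y, true⟩ : Lit) ∈ C))) l
              = (if l.pos then decide ((⟨y, true⟩ : Lit) ∈ C) else !(decide ((⟨y, true⟩ : Lit) ∈ C))) := by
            simp only [Lit.eval]
            rw [hvy]
            simp [Function.update_self]
          rw [this]
          cases hp : l.pos with
          | true =>
            have : l = (⟨y, true⟩ : Lit) := by
              obtain ⟨v, pp⟩ := l; simp_all
            simp [this ▸ hl]
          | false =>
            have hl' : l = (⟨y, false⟩ : Lit) := by
              obtain ⟨v, pp⟩ := l; simp_all
            have : (⟨y, true⟩ : Lit) ∉ C := by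
              intro hmem
              rw [hl'] at hl
              have := same_sign hnt hl hmem rfl
              simp at this
            simp [this]
        · rw [show Lit.eval (Function.update α y (decide ((⟨y, true⟩ : Lit) ∈ C))) l = Lit.eval α l from
            lit_eval_congr l (Function.update_of_ne hvy _ _)]
          refine hout l hl ?_
          simp only [pvars_cons, List.mem_cons, not_or]
          exact ⟨hvy, hlr⟩
      · intro l hl hlr
        exact hq l hl (by simp [pvars_cons, hlr])
lemma exRed_subset {L : QPrefix} {C : Cube} : ∀ l ∈ exRed L C, l ∈ C :=
  fun _ h => List.mem_of_mem_filter h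

lemma exRed_removed {L : QPrefix} {C : Cube} {l : Lit} (hl : l ∈ C) (hnl : l ∉ exRed L C) :
    quantOf L l.var = true ∧
    ∀ l' ∈ C, quantOf L l'.var = false → varIdx L l'.var < varIdx L l.var := by
  have hpred : ¬ ((!((quantOf L l.var) &&
      (univLits L C).all (fun l' => decide (varIdx L l'.var < varIdx L l.var)))) = true) := by
    intro hp
    exact hnl (List.mem_filter.mpr ⟨hl, hp⟩)
  simp only [Bool.not_eq_true', Bool.not_eq_false, Bool.and_eq_true, List.all_eq_true] at hpred
  refine ⟨hpred.1, ?_⟩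
  intro l' hl' hq
  have : l' ∈ univLits L C := List.mem_filter.mpr ⟨hl', by simp [hq]⟩
  simpa using hpred.2 l' this

lemma cubeDer_facts {L : QPrefix} {φ : CNF} {C : Cube} (h : CubeDer L φ C) :
    ¬ Tauto C ∧ ∀ l ∈ C, l.var ∈ pvars L := by
  induction h with
  | init α hα =>
    constructor
    · rintro ⟨l, hl, hneg⟩
      simp only [initCube, List.mem_map] at hl hneg
      obtain ⟨p, _, hp⟩ := hl
      obtain ⟨p', _, hp'⟩ := hneg
      have h1 : l.var = p.2 ∧ l.pos = α p.2 := by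
        rw [← hp]; exact ⟨rfl, rfl⟩
      have h2 : l.var = p'.2 ∧ (!l.pos) = α p'.2 := by
        have : (Lit.neg l).var = p'.2 ∧ (Lit.neg l).pos = α p'.2 := by
          rw [← hp']; exact ⟨rfl, rfl⟩
        exact this
      have e1 : l.pos = α l.var := by rw [h1.1]; exact h1.2
      have e2 : (!l.pos) = α l.var := by rw [h2.1]; exact h2.2
      rw [← e1] at e2
      cases hp : l.pos <;> rw [hp] at e2 <;> simp at e2
    · intro l hl
      simp only [initCube, List.mem_map] at hl
      obtain ⟨p, hp, hpe⟩ := hl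
      rw [← hpe]
      exact List.mem_map_of_mem (f := Prod.snd) hp
  | er _ ih =>
    exact ⟨fun ⟨l, hl, hneg⟩ => ih.1 ⟨l, exRed_subset l hl, exRed_subset _ hneg⟩,
      fun l hl => ih.2 l (exRed_subset l hl)⟩
  | res _ _ _ _ _ _ _ hnt ih1 ih2 =>
    refine ⟨hnt, ?_⟩
    intro l hl
    simp only [cubeResolvent, List.mem_append] at hl
    rcases hl with hl | hl
    · exact ih1.2 l (exRed_subset l (List.mem_of_mem_filter hl))
    · exact ih2.2 l (exRed_subset l (List.mem_of_mem_filter hl))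
/-- Soundness of existential reduction: the existential player can recover the full cube. -/
lemma walk {LL : QPrefix} (hnd : (pvars LL).Nodup) (M : Assignment → Bool) (C : Cube)
    (hnt : ¬ Tauto C) :
    ∀ (L₂ L₁ : QPrefix), LL = L₁ ++ L₂ →
    ∀ (α : Assignment),
    (∀ l ∈ C, l.var ∉ pvars L₂ → Lit.eval α l = true) →
    QSat α L₂ (fun β => M β || Cube.evalCube β (exRed LL C)) →
    QSat α L₂ (fun β => M β || Cube.evalCube β C) := by
  intro L₂
  induction L₂ with
  | nil =>
    intro L₁ hsplit α hout hQ
    simp only [QSat] at hQ ⊢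
    have : Cube.evalCube α C = true :=
      List.all_eq_true.mpr (fun l hl => hout l hl (by simp [pvars]))
    simp [this]
  | cons p rest ih =>
    intro L₁ hsplit α hout hQ
    obtain ⟨q, y⟩ := p
    have hynr : y ∉ pvars rest := by
      rw [hsplit, pvars_append, pvars_cons] at hnd
      exact (List.nodup_cons.mp (List.nodup_append.mp hnd).2.1).1
    -- preservation of the "all assigned literals true" invariant
    have hpres : ∀ (b : Bool),
        (∀ l ∈ C, l.var = y → Lit.eval (Function.update α y b) l = true) →
        (∀ l ∈ C, l.var ∉ pvars rest → Lit.eval (Function.update α y b) l = true) := by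
      intro b hall l hl hlr
      by_cases hly : l.var = y
      · exact hall l hl hly
      · rw [lit_eval_congr l (Function.update_of_ne hly _ _)]
        refine hout l hl ?_
        simp only [pvars_cons, List.mem_cons, not_or]
        exact ⟨hly, hlr⟩
    -- Mode B: some literal of the reduced cube is already false
    have hmodeB : ∀ (b : Bool) (l' : Lit), l' ∈ exRed LL C →
        Lit.eval (Function.update α y b) l' = false → l'.var ∉ pvars rest →
        QSat (Function.update α y b) rest (fun β => M β || Cube.evalCube β (exRed LL C)) →
        QSat (Function.update α y b) rest (fun β => M β || Cube.evalCube β C) := by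
      intro b l' hmem hfalse hl'nr hb
      refine qsat_mono ?_ hb
      intro β hagree hm
      have hβ : Lit.eval β l' = false := by
        rw [lit_eval_congr l' (hagree l'.var hl'nr)]
        exact hfalse
      have : Cube.evalCube β (exRed LL C) = false := by
        simp only [Cube.evalCube]
        rw [List.all_eq_false]
        exact ⟨l', hmem, by simp [hβ]⟩
      rw [this, Bool.or_false] at hm
      simp [hm]
    cases q with
    | true =>
      obtain ⟨b₀, hb₀⟩ := hQ
      by_cases hall : ∀ l ∈ C, l.var = y → Lit.eval (Function.update α y b₀) l = true
      · exact ⟨b₀, ih (L₁ ++ [(true, y)]) (by simp [hsplit]) _ (hpres b₀ hall) hb₀⟩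
      · push_neg at hall
        obtain ⟨l', hl', hvy, heval⟩ := hall
        replace heval := eq_false_of_ne_true heval
        by_cases hmem : l' ∈ exRed LL C
        · exact ⟨b₀, hmodeB b₀ l' hmem heval (hvy ▸ hynr) hb₀⟩
        · -- l' was removed by existential reduction: deviate and satisfy C outright
          have hrem := exRed_removed hl' hmem
          refine ⟨l'.pos, ?_⟩
          have hcube : QSat (Function.update α y l'.pos) rest (fun β => Cube.evalCube β C) := by
            refine qsat_cube C hnt rest (L₁ ++ [(true, y)]) (by simp [hsplit]) hnd _ ?_ ?_
            · intro l hl hlr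
              by_cases hly : l.var = y
              · have hll' : l = l' := same_sign hnt hl hl' (by rw [hly, hvy])
                rw [hll']
                have hv : Function.update α y l'.pos l'.var = l'.pos := by
                  rw [hvy]; simp
                cases hp : l'.pos
                all_goals rw [hp] at hv
                all_goals simp [Lit.eval, hp, hv]
              · rw [lit_eval_congr l (Function.update_of_ne hly _ _)]
                refine hout l hl ?_
                simp only [pvars_cons, List.mem_cons, not_or]
                exact ⟨hly, hlr⟩
            · intro l hl hlr
              by_contra hqf
              rw [Bool.not_eq_true] at hqf
              have h1 := hrem.2 l hl hqf
              have h2 : varIdx LL l'.var < varIdx LL l.var := by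
                rw [hvy, hsplit]
                exact varIdx_lt (hsplit ▸ hnd) hlr
              omega
          refine qsat_mono ?_ hcube
          intro β _ hm
          simp [hm]
    | false =>
      intro b
      have hb := hQ b
      by_cases hall : ∀ l ∈ C, l.var = y → Lit.eval (Function.update α y b) l = true
      · exact ih (L₁ ++ [(false, y)]) (by simp [hsplit]) _ (hpres b hall) hb
      · push_neg at hall
        obtain ⟨l', hl', hvy, heval⟩ := hall
        replace heval := eq_false_of_ne_true heval
        have hmem : l' ∈ exRed LL C := by
          by_contra hmem
          have hrem := exRed_removed hl' hmem
          have : quantOf LL l'.var = false := by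
            rw [hvy, hsplit]
            exact quantOf_eq (hsplit ▸ hnd)
          rw [hrem.1] at this
          simp at this
        exact hmodeB b l' hmem heval (hvy ▸ hynr) hb
lemma qsat_mono' {L : QPrefix} {α : Assignment} {m₁ m₂ : Assignment → Bool}
    (h : ∀ β, m₁ β = true → m₂ β = true) : QSat α L m₁ → QSat α L m₂ :=
  qsat_mono (fun β _ => h β)

lemma clause_eval_congr {β γ : Assignment} {Cl : Clause}
    (h : ∀ v ∈ Clause.vars Cl, β v = γ v) : Clause.eval β Cl = Clause.eval γ Cl := by
  unfold Clause.eval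
  induction Cl with
  | nil => rfl
  | cons l t ihc =>
    simp only [List.any_cons]
    rw [lit_eval_congr l (h l.var (by simp [Clause.vars])),
      ihc (fun v hv => h v (by simp [Clause.vars] at hv ⊢; exact Or.inr hv))]

lemma cnf_eval_congr {β γ : Assignment} {φ : CNF}
    (h : ∀ v ∈ CNF.vars φ, β v = γ v) : CNF.eval β φ = CNF.eval γ φ := by
  unfold CNF.eval
  induction φ with
  | nil => rfl
  | cons Cl t ihc =>
    simp only [List.all_cons]
    rw [clause_eval_congr (fun v hv => h v (by simp [CNF.vars] at hv ⊢; exact Or.inl hv)),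
      ihc (fun v hv => h v (by simp [CNF.vars] at hv ⊢; exact Or.inr hv))]

lemma res_pointwise {L : QPrefix} {x : Var} {C₁ C₂ : Cube} (β : Assignment)
    (h : Cube.evalCube β (cubeResolvent L C₁ C₂ x) = true) :
    Cube.evalCube β (exRed L C₁) = true ∨ Cube.evalCube β (exRed L C₂) = true := by
  simp only [Cube.evalCube, List.all_eq_true] at h ⊢
  cases hβ : β x with
  | true =>
    left
    intro l hl
    by_cases he : l = (⟨x, true⟩ : Lit)
    · rw [he]; simp [Lit.eval, hβ]
    · refine h l ?_
      simp only [cubeResolvent, List.mem_append]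
      exact Or.inl (List.mem_filter.mpr ⟨hl, by simp [he]⟩)
  | false =>
    right
    intro l hl
    by_cases he : l = (⟨x, false⟩ : Lit)
    · rw [he]; simp [Lit.eval, hβ]
    · refine h l ?_
      simp only [cubeResolvent, List.mem_append]
      exact Or.inr (List.mem_filter.mpr ⟨hl, by simp [he]⟩)
/-- if the empty cube is derivable by the model generation rule,
existential reduction and cube resolution, then the closed PCNF is satisfiable. -/
theorem empty_cube_sat (L : QPrefix) (φ : CNF)
    (hclosed : Closed L φ)
    (h : CubeDer L φ ([] : Cube)) :
    Sat L (fun α => CNF.eval α φ) := by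
  obtain ⟨hsub, hnd⟩ := hclosed
  have key : ∀ C, CubeDer L φ C → ∀ m : Assignment → Bool,
      (QSat (fun _ => false) L (fun β => CNF.eval β φ || m β) →
        QSat (fun _ => false) L (fun β => CNF.eval β φ)) →
      QSat (fun _ => false) L (fun β => CNF.eval β φ || (m β || Cube.evalCube β C)) →
      QSat (fun _ => false) L (fun β => CNF.eval β φ || m β) := by
    intro C hC
    induction hC with
    | init γ hγ =>
      intro m _ hQ
      refine qsat_mono' ?_ hQ
      intro β hm
      rcases Bool.or_eq_true_iff.mp hm with hh | hh
      · simp [hh]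
      rcases Bool.or_eq_true_iff.mp hh with hh | hh
      · simp [hh]
      -- initCube true at β ⇒ β = γ on prefix vars ⇒ φ true at β
      have hagree : ∀ v ∈ pvars L, β v = γ v := by
        intro v hv
        simp only [pvars, List.mem_map] at hv
        obtain ⟨p, hp, hpv⟩ := hv
        simp only [Cube.evalCube, List.all_eq_true] at hh
        have := hh ⟨p.2, γ p.2⟩ (by simp only [initCube, List.mem_map]; exact ⟨p, hp, rfl⟩)
        rw [← hpv]
        cases hg : γ p.2 <;> rw [hg] at this <;> simpa [Lit.eval, hg] using this
      have : CNF.eval β φ = true := by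
        rw [cnf_eval_congr (fun v hv => hagree v (hsub v hv))]
        exact hγ
      simp [this]
    | er hC' ihC =>
      intro m Hm hQ
      rename_i C'
      have facts := cubeDer_facts hC'
      have hq2 : QSat (fun _ => false) L
          (fun β => (CNF.eval β φ || m β) || Cube.evalCube β (exRed L C')) := by
        refine qsat_mono' ?_ hQ
        intro β hb
        rcases Bool.or_eq_true_iff.mp hb with hh | hh
        · simp [hh]
        · rcases Bool.or_eq_true_iff.mp hh with hh | hh <;> simp [hh]
      have hW := walk hnd (fun β => CNF.eval β φ || m β) C' facts.1 L [] rfl (fun _ => false)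
        (fun l hl hlr => absurd (facts.2 l hl) hlr) hq2
      have hW2 : QSat (fun _ => false) L
          (fun β => CNF.eval β φ || (m β || Cube.evalCube β C')) := by
        refine qsat_mono' ?_ hW
        intro β hb
        rcases Bool.or_eq_true_iff.mp hb with hh | hh
        · rcases Bool.or_eq_true_iff.mp hh with hh | hh <;> simp [hh]
        · simp [hh]
      exact ihC m Hm hW2
    | res hC1 hC2 hnt1 hnt2 hqx hx1 hx2 hntR ih1 ih2 =>
      intro m Hm hQ
      rename_i C₁ C₂ x
      have facts1 := cubeDer_facts hC1
      have facts2 := cubeDer_facts hC2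
      -- PP for the reduced parents
      have pp1 : ∀ m' : Assignment → Bool,
          (QSat (fun _ => false) L (fun β => CNF.eval β φ || m' β) →
            QSat (fun _ => false) L (fun β => CNF.eval β φ)) →
          QSat (fun _ => false) L
            (fun β => CNF.eval β φ || (m' β || Cube.evalCube β (exRed L C₁))) →
          QSat (fun _ => false) L (fun β => CNF.eval β φ || m' β) := by
        intro m' Hm' hq
        have hq2 : QSat (fun _ => false) L
            (fun β => (CNF.eval β φ || m' β) || Cube.evalCube β (exRed L C₁)) := by
          refine qsat_mono' ?_ hq
          intro β hb
          rcases Bool.or_eq_true_iff.mp hb with hh | hh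
          · simp [hh]
          · rcases Bool.or_eq_true_iff.mp hh with hh | hh <;> simp [hh]
        have hW := walk hnd (fun β => CNF.eval β φ || m' β) C₁ facts1.1 L [] rfl (fun _ => false)
          (fun l hl hlr => absurd (facts1.2 l hl) hlr) hq2
        have hW2 : QSat (fun _ => false) L
            (fun β => CNF.eval β φ || (m' β || Cube.evalCube β C₁)) := by
          refine qsat_mono' ?_ hW
          intro β hb
          rcases Bool.or_eq_true_iff.mp hb with hh | hh
          · rcases Bool.or_eq_true_iff.mp hh with hh | hh <;> simp [hh]
          · simp [hh]
        exact ih1 m' Hm' hW2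
      have pp2 : ∀ m' : Assignment → Bool,
          (QSat (fun _ => false) L (fun β => CNF.eval β φ || m' β) →
            QSat (fun _ => false) L (fun β => CNF.eval β φ)) →
          QSat (fun _ => false) L
            (fun β => CNF.eval β φ || (m' β || Cube.evalCube β (exRed L C₂))) →
          QSat (fun _ => false) L (fun β => CNF.eval β φ || m' β) := by
        intro m' Hm' hq
        have hq2 : QSat (fun _ => false) L
            (fun β => (CNF.eval β φ || m' β) || Cube.evalCube β (exRed L C₂)) := by
          refine qsat_mono' ?_ hq
          intro β hb
          rcases Bool.or_eq_true_iff.mp hb with hh | hh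
          · simp [hh]
          · rcases Bool.or_eq_true_iff.mp hh with hh | hh <;> simp [hh]
        have hW := walk hnd (fun β => CNF.eval β φ || m' β) C₂ facts2.1 L [] rfl (fun _ => false)
          (fun l hl hlr => absurd (facts2.2 l hl) hlr) hq2
        have hW2 : QSat (fun _ => false) L
            (fun β => CNF.eval β φ || (m' β || Cube.evalCube β C₂)) := by
          refine qsat_mono' ?_ hW
          intro β hb
          rcases Bool.or_eq_true_iff.mp hb with hh | hh
          · rcases Bool.or_eq_true_iff.mp hh with hh | hh <;> simp [hh]
          · simp [hh]
        exact ih2 m' Hm' hW2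
      -- pointwise: the resolvent implies one of the reduced parents
      have hQ' : QSat (fun _ => false) L
          (fun β => CNF.eval β φ ||
            ((m β || Cube.evalCube β (exRed L C₁)) || Cube.evalCube β (exRed L C₂))) := by
        refine qsat_mono' ?_ hQ
        intro β hb
        rcases Bool.or_eq_true_iff.mp hb with hh | hh
        · simp [hh]
        rcases Bool.or_eq_true_iff.mp hh with hh | hh
        · simp [hh]
        rcases res_pointwise β hh with hh | hh <;> simp [hh]
      have h3 := pp2 (fun β => m β || Cube.evalCube β (exRed L C₁))
        (fun hh => Hm (pp1 m Hm hh)) hQ'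
      exact pp1 m Hm h3
  have hTop : QSat (fun _ => false) L
      (fun β => CNF.eval β φ || ((fun _ => false) β || Cube.evalCube β ([] : Cube))) :=
    qsat_true (fun β => by simp [Cube.evalCube]) L _
  have hstep : QSat (fun _ => false) L (fun β => CNF.eval β φ || (fun _ => false) β) →
      QSat (fun _ => false) L (fun β => CNF.eval β φ) := by
    intro hh
    refine qsat_mono' ?_ hh
    intro β hb
    simpa using hb
  exact hstep (key ([] : Cube) h (fun _ => false) hstep hTop)
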